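/- Let ℓ ≥ 0 be an integer, ε ∈ (0,1), ε' = log((1+ε)/(1−ε)), and define A^{h₁,h₂}, B^{h₁,h₂} as above. If h₁ ~ Binomial(ℓ, 1/2), then E[A^{h₁, ℓ−h₁}] = 1 and E[(B^{h₁,ℓ−h₁})²/A^{h₁,ℓ−h₁}] ≤ ε'²·ℓ. -/

import Mathlib

/-- For `h₁ ~ Binomial(ℓ, 1/2)`: `E[A^{h₁,ℓ−h₁}] = 1` and
`E[(B^{h₁,ℓ−h₁})²/A^{h₁,ℓ−h₁}] ≤ ε'²·ℓ`, where `ε' = log((1+ε)/(1−ε))`. -/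
theorem stmt16 (ℓ : ℕ) (ε : ℝ) (hε0 : 0 < ε) (hε1 : ε < 1) :
    let ε' : ℝ := Real.log ((1 + ε) / (1 - ε))
    let A : ℕ → ℕ → ℝ := fun h₁ h₂ =>
      ((1 - ε) ^ h₁ * (1 + ε) ^ h₂ + (1 - ε) ^ h₂ * (1 + ε) ^ h₁) / 2
    let B : ℕ → ℕ → ℝ := fun h₁ h₂ =>
      ((1 - ε) ^ h₁ * (1 + ε) ^ h₂ - (1 - ε) ^ h₂ * (1 + ε) ^ h₁) / 2
    (∑ k ∈ Finset.range (ℓ + 1), (ℓ.choose k : ℝ) / 2 ^ ℓ * A k (ℓ - k)) = 1 ∧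
      (∑ k ∈ Finset.range (ℓ + 1), (ℓ.choose k : ℝ) / 2 ^ ℓ *
          ((B k (ℓ - k)) ^ 2 / A k (ℓ - k))) ≤ ε' ^ 2 * ℓ := by
  intro ε' A B
  have hε2 : (0:ℝ) < 1 - ε := by linarith
  have hε3 : (0:ℝ) < 1 + ε := by linarith
  have h2pow : (0:ℝ) < 2 ^ ℓ := by positivity
  -- binomial theorem sums
  have h1 : ∑ k ∈ Finset.range (ℓ + 1),
      (1 - ε) ^ k * (1 + ε) ^ (ℓ - k) * (ℓ.choose k : ℝ) = 2 ^ ℓ := by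
    rw [← add_pow]; norm_num
  have h2 : ∑ k ∈ Finset.range (ℓ + 1),
      (1 + ε) ^ k * (1 - ε) ^ (ℓ - k) * (ℓ.choose k : ℝ) = 2 ^ ℓ := by
    rw [← add_pow]; norm_num
  -- part 1
  have hA : (∑ k ∈ Finset.range (ℓ + 1), (ℓ.choose k : ℝ) / 2 ^ ℓ * A k (ℓ - k)) = 1 := by
    have e : ∀ k ∈ Finset.range (ℓ + 1), (ℓ.choose k : ℝ) / 2 ^ ℓ * A k (ℓ - k)
        = ((1 - ε) ^ k * (1 + ε) ^ (ℓ - k) * (ℓ.choose k : ℝ)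
          + (1 + ε) ^ k * (1 - ε) ^ (ℓ - k) * (ℓ.choose k : ℝ)) / 2 / 2 ^ ℓ := by
      intro k _; simp only [A]; ring
    rw [Finset.sum_congr rfl e, ← Finset.sum_div, ← Finset.sum_div,
      Finset.sum_add_distrib, h1, h2]
    field_simp
    norm_num
  have hsum_p : (∑ k ∈ Finset.range (ℓ + 1), (ℓ.choose k : ℝ) / 2 ^ ℓ) = 1 := by
    have h : (∑ k ∈ Finset.range (ℓ + 1), (ℓ.choose k : ℝ)) = 2 ^ ℓ := by
      exact_mod_cast Nat.sum_range_choose ℓ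
    rw [← Finset.sum_div, h, div_self (ne_of_gt h2pow)]
  refine ⟨hA, ?_⟩
  -- the constant c = sqrt((1-ε²)^ℓ)
  set c : ℝ := Real.sqrt ((1 - ε ^ 2) ^ ℓ) with hc
  have hpos : (0:ℝ) < (1 - ε ^ 2) ^ ℓ := by
    apply pow_pos; nlinarith
  have hc0 : 0 ≤ c := Real.sqrt_nonneg _
  have hcsq : c ^ 2 = (1 - ε ^ 2) ^ ℓ := Real.sq_sqrt (le_of_lt hpos)
  -- pointwise bound
  have hpt : ∀ k ∈ Finset.range (ℓ + 1),
      (ℓ.choose k : ℝ) / 2 ^ ℓ * ((B k (ℓ - k)) ^ 2 / A k (ℓ - k))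
      ≤ (ℓ.choose k : ℝ) / 2 ^ ℓ * (2 * A k (ℓ - k) - 2 * c) := by
    intro k hk
    have hk' : k ≤ ℓ := Nat.lt_succ_iff.mp (Finset.mem_range.mp hk)
    have hpnn : (0:ℝ) ≤ (ℓ.choose k : ℝ) / 2 ^ ℓ := by positivity
    apply mul_le_mul_of_nonneg_left _ hpnn
    set a : ℝ := (1 - ε) ^ k * (1 + ε) ^ (ℓ - k) with ha
    set b : ℝ := (1 - ε) ^ (ℓ - k) * (1 + ε) ^ k with hb
    have ha0 : 0 < a := by positivity
    have hb0 : 0 < b := by positivity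
    have hab : a * b = (1 - ε ^ 2) ^ ℓ := by
      have hk2 : k + (ℓ - k) = ℓ := Nat.add_sub_cancel' hk'
      calc a * b = (1 - ε) ^ (k + (ℓ - k)) * (1 + ε) ^ (k + (ℓ - k)) := by
            rw [pow_add, pow_add]; ring
        _ = ((1 - ε) * (1 + ε)) ^ ℓ := by rw [hk2, mul_pow]
        _ = (1 - ε ^ 2) ^ ℓ := by ring_nf
    have hcab : c ^ 2 = a * b := by rw [hcsq, hab]
    show ((a - b) / 2) ^ 2 / ((a + b) / 2) ≤ 2 * ((a + b) / 2) - 2 * c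
    rw [div_le_iff₀ (by positivity : (0:ℝ) < (a + b) / 2)]
    nlinarith [sq_nonneg (a + b - 2 * c), hcab, hc0, ha0, hb0]
  -- ε' lower bound
  have hε' : 3 / 2 * ε ≤ ε' := by
    have hlog : ε' = Real.log (1 + ε) - Real.log (1 - ε) :=
      Real.log_div (ne_of_gt hε3) (ne_of_gt hε2)
    have l1 : Real.log (1 - ε) ≤ -ε := by
      have := Real.log_le_sub_one_of_pos hε2; linarith
    have l2 : ε / 2 ≤ Real.log (1 + ε) := by
      have h := Real.log_le_sub_one_of_pos (show (0:ℝ) < (1 + ε)⁻¹ by positivity)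
      rw [Real.log_inv] at h
      have hinv : (1 + ε)⁻¹ ≤ 1 - ε / 2 := by
        rw [← one_div, div_le_iff₀ hε3]; nlinarith
      linarith
    rw [hlog]; linarith
  -- bound on c
  have hc1 : (1:ℝ) - ℓ * ε ^ 2 ≤ c := by
    have hb : (1:ℝ) - ℓ * ε ^ 2 ≤ (1 - ε ^ 2) ^ ℓ := by
      have h := one_add_mul_le_pow (show (-2:ℝ) ≤ -ε ^ 2 by nlinarith) ℓ
      have : (1:ℝ) + -ε ^ 2 = 1 - ε ^ 2 := by ring
      rw [this] at h
      linarith [h]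
    have hle1 : (1 - ε ^ 2) ^ ℓ ≤ 1 := pow_le_one₀ (by nlinarith) (by nlinarith)
    have hsq : ((1 - ε ^ 2) ^ ℓ) ^ 2 ≤ (1 - ε ^ 2) ^ ℓ := by nlinarith
    have h2 : (1 - ε ^ 2) ^ ℓ ≤ c := by
      have := Real.sqrt_le_sqrt hsq
      rwa [Real.sqrt_sq (le_of_lt hpos)] at this
    linarith
  -- assemble
  calc (∑ k ∈ Finset.range (ℓ + 1), (ℓ.choose k : ℝ) / 2 ^ ℓ *
          ((B k (ℓ - k)) ^ 2 / A k (ℓ - k)))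
      ≤ ∑ k ∈ Finset.range (ℓ + 1), (ℓ.choose k : ℝ) / 2 ^ ℓ *
          (2 * A k (ℓ - k) - 2 * c) := Finset.sum_le_sum hpt
    _ = 2 * (∑ k ∈ Finset.range (ℓ + 1), (ℓ.choose k : ℝ) / 2 ^ ℓ * A k (ℓ - k))
        - 2 * c * (∑ k ∈ Finset.range (ℓ + 1), (ℓ.choose k : ℝ) / 2 ^ ℓ) := by
      rw [Finset.mul_sum, Finset.mul_sum, ← Finset.sum_sub_distrib]
      exact Finset.sum_congr rfl fun k _ => by ring
    _ = 2 - 2 * c := by rw [hA, hsum_p]; ring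
    _ ≤ 2 * ℓ * ε ^ 2 := by linarith
    _ ≤ ε' ^ 2 * ℓ := by
      have hℓ : (0:ℝ) ≤ (ℓ : ℝ) := Nat.cast_nonneg ℓ
      have hq : (3 / 2 * ε) ^ 2 ≤ ε' ^ 2 := by nlinarith
      have hq2 : (3 / 2 * ε) ^ 2 * ℓ ≤ ε' ^ 2 * ℓ := mul_le_mul_of_nonneg_right hq hℓ
      nlinarith [mul_nonneg (sq_nonneg ε) hℓ]
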